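/- Let f ∈ F_q[T] be a monic polynomial. Then every monic irreducible Q ∈ F_q[T] with χ_q(Q(0)) = −1 divides f with even multiplicity if and only if every monic irreducible Q ∈ F_q[T] such that Q(−S²) is irreducible in F_q[S] divides f with even multiplicity. Equivalently, for a monic irreducible Q ∈ F_q[T] of degree at least 1, one has χ_q(Q(0)) = −1 if and only if Q(−S²) is irreducible in F_q[S]. -/

import Mathlib

open Polynomial IntermediateField

/-- In a finite field extension `K` of a finite field `F`, any element fixed by the
`|F|`-power Frobenius lies in the image of `F`. -/
lemma fixed_point_range_aux {F K : Type*} [Field F] [Fintype F] [Field K] [Fintype K]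
    [Algebra F K] {x : K} (hx : x ^ Fintype.card F = x) : ∃ c : F, algebraMap F K c = x := by
  classical
  set q := Fintype.card F with hqdef
  have hq1 : 1 < q := Fintype.one_lt_card
  set g : K[X] := X ^ q - X with hgdef
  have hg0 : g ≠ 0 := by
    intro h
    have hcq : g.coeff q = 1 := by
      rw [hgdef, coeff_sub, coeff_X_pow, if_pos rfl, coeff_X, if_neg (by omega), sub_zero]
    rw [h] at hcq
    simp at hcq
  have hgdeg : g.natDegree ≤ q := by
    refine (natDegree_sub_le _ _).trans ?_
    simp [natDegree_X_pow]
    omega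
  have hroots_le : g.roots.toFinset.card ≤ q := by
    refine (Multiset.toFinset_card_le _).trans ((Polynomial.card_roots' g).trans hgdeg)
  set S : Finset K := Finset.univ.image (algebraMap F K) with hSdef
  have hScard : S.card = q := by
    rw [hSdef, Finset.card_image_of_injective _ (algebraMap F K).injective, Finset.card_univ]
  have hSsub : S ⊆ g.roots.toFinset := by
    intro y hy
    rw [hSdef, Finset.mem_image] at hy
    obtain ⟨c, -, rfl⟩ := hy
    rw [Multiset.mem_toFinset, mem_roots hg0]
    simp only [IsRoot, hgdef, eval_sub, eval_pow, eval_X]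
    rw [← map_pow, FiniteField.pow_card, sub_self]
  have hEq : S = g.roots.toFinset :=
    Finset.eq_of_subset_of_card_le hSsub (by rw [hScard]; exact hroots_le)
  have hxroot : x ∈ g.roots.toFinset := by
    rw [Multiset.mem_toFinset, mem_roots hg0]
    simp only [IsRoot, hgdef, eval_sub, eval_pow, eval_X]
    rw [hx, sub_self]
  rw [← hEq, hSdef, Finset.mem_image] at hxroot
  obtain ⟨c, -, hc⟩ := hxroot
  exact ⟨c, hc⟩

/-- The image of `Q.eval 0` in `AdjoinRoot Q` is `(-1)^n α^(1+q+⋯+q^(n-1))`. -/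
lemma conj_prod_aux {F : Type} [Field F] [Fintype F] (Q : F[X]) (hm : Q.Monic)
    (hi : Irreducible Q) :
    haveI := Fact.mk hi
    algebraMap F (AdjoinRoot Q) (Q.eval 0)
      = (-1) ^ Q.natDegree *
        (AdjoinRoot.root Q) ^ (∑ i ∈ Finset.range Q.natDegree, Fintype.card F ^ i) := by
  classical
  haveI := Fact.mk hi
  set q := Fintype.card F with hqdef
  set n := Q.natDegree with hndef
  set K := AdjoinRoot Q with hKdef
  set α : K := AdjoinRoot.root Q with hαdef
  haveI : Nontrivial K := inferInstanceAs (Nontrivial (AdjoinRoot Q))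
  have hn0 : 0 < n := by
    rcases Nat.eq_zero_or_pos n with h | h
    · exfalso
      have hQ : Q = C (Q.coeff 0) := eq_C_of_natDegree_eq_zero h
      have hco : Q.coeff 0 = 1 := by
        have hl := hm.leadingCoeff
        rwa [Polynomial.leadingCoeff, ← hndef, h] at hl
      have hQ1 : Q = 1 := by rw [hQ, hco, map_one]
      exact hi.not_isUnit (hQ1 ▸ isUnit_one)
    · exact h
  letI pb := AdjoinRoot.powerBasis (f := Q) hm.ne_zero
  haveI : Module.Finite F K := Module.Finite.of_basis pb.basis
  letI : Fintype K := Module.fintypeOfFintype pb.basis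
  have hfrFK : Module.finrank F K = n := by
    rw [pb.finrank, AdjoinRoot.powerBasis_dim]
  have hcardK : Fintype.card K = q ^ n := by
    rw [Module.card_eq_pow_finrank (K := F) (V := K), hfrFK]
  -- Frobenius
  obtain ⟨p, hcF⟩ := CharP.exists F
  haveI : CharP F p := hcF
  obtain ⟨m, hp, hq_eq⟩ := FiniteField.card F p
  haveI hpfact : Fact p.Prime := ⟨hp⟩
  haveI : CharP K p := charP_of_injective_algebraMap (algebraMap F K).injective p
  haveI : ExpChar K p := ExpChar.prime hp
  set φ : K →+* K := iterateFrobenius K p m with hφdef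
  have hφ : ∀ x : K, φ x = x ^ q := by
    intro x
    rw [hφdef, iterateFrobenius_def, ← hq_eq]
  have hαn : α ^ q ^ n = α := by
    rw [← hcardK, FiniteField.pow_card]
  set P : K[X] := ∏ i ∈ Finset.range n, (X - C (α ^ q ^ i)) with hPdef
  have hPmonic : P.Monic := monic_prod_of_monic _ _ fun i _ => monic_X_sub_C _
  have hmapP : P.map φ = P := by
    rw [hPdef, Polynomial.map_prod]
    have h1 : ∀ i, ((X : K[X]) - C (α ^ q ^ i)).map φ = X - C (α ^ q ^ (i + 1)) := by
      intro i
      rw [Polynomial.map_sub, map_X, map_C, hφ, ← pow_mul, ← pow_succ]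
    simp only [h1]
    have hfn : (X : K[X]) - C (α ^ q ^ n) = X - C (α ^ q ^ 0) := by
      rw [hαn, pow_zero, pow_one]
    apply mul_right_cancel₀ (b := (X : K[X]) - C (α ^ q ^ 0)) (X_sub_C_ne_zero _)
    rw [← Finset.prod_range_succ' (fun i => (X : K[X]) - C (α ^ q ^ i)) n,
      Finset.prod_range_succ, hfn]
  have hcoeff : ∀ k, P.coeff k ∈ Set.range (algebraMap F K) := by
    intro k
    have hfix : φ (P.coeff k) = P.coeff k := by
      conv_rhs => rw [← hmapP]
      rw [coeff_map]
    rw [hφ] at hfix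
    exact fixed_point_range_aux hfix
  obtain ⟨P₀, hP₀map, hP₀deg, hP₀monic⟩ :=
    lifts_and_degree_eq_and_monic ((Polynomial.lifts_iff_coeff_lifts P).mpr hcoeff) hPmonic
  have haevalP₀ : (Polynomial.aeval α) P₀ = 0 := by
    rw [aeval_def, ← eval_map, hP₀map, hPdef, eval_prod]
    refine Finset.prod_eq_zero (Finset.mem_range.mpr hn0) ?_
    simp
  have hminQ : minpoly F α = Q := by
    rw [hαdef, AdjoinRoot.minpoly_root hm.ne_zero, hm.leadingCoeff, inv_one, map_one, mul_one]
  have hdvd : Q ∣ P₀ := hminQ ▸ minpoly.dvd F α haevalP₀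
  have hPdeg : P.natDegree = n := by
    rw [hPdef, natDegree_prod _ _ fun i _ => X_sub_C_ne_zero _,
      Finset.sum_congr rfl fun i _ => natDegree_X_sub_C (α ^ q ^ i)]
    simp
  have hP₀natdeg : P₀.natDegree = n := by
    rw [← hPdeg]
    exact natDegree_eq_of_degree_eq hP₀deg
  have hQeq : Q = P₀ := by
    obtain ⟨t, ht⟩ := hdvd
    have ht0 : t ≠ 0 := by
      rintro rfl
      rw [mul_zero] at ht
      exact hP₀monic.ne_zero ht
    have hdeg : n = n + t.natDegree := by
      conv_lhs => rw [← hP₀natdeg]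
      rw [ht, natDegree_mul hm.ne_zero ht0, hndef]
    have htdeg : t.natDegree = 0 := by omega
    have htC : t = C (t.coeff 0) := eq_C_of_natDegree_eq_zero htdeg
    have hlc : t.coeff 0 = 1 := by
      have := hP₀monic.leadingCoeff
      rw [ht, leadingCoeff_mul, hm.leadingCoeff, one_mul, Polynomial.leadingCoeff, htdeg] at this
      exact this
    rw [ht, htC, hlc, map_one, mul_one]
  have hQ0P : Q.eval 0 = P₀.eval 0 := by rw [hQeq]
  have h0 : algebraMap F K (P₀.eval 0) = P.eval 0 := by
    rw [← coeff_zero_eq_eval_zero, ← coeff_zero_eq_eval_zero, ← hP₀map, coeff_map]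
  rw [hQ0P, h0, hPdef, eval_prod]
  have hev : ∀ i ∈ Finset.range n, eval 0 ((X : K[X]) - C (α ^ q ^ i)) = -1 * α ^ q ^ i := by
    intro i _
    simp
    ring
  rw [Finset.prod_congr rfl hev, Finset.prod_mul_distrib, Finset.prod_const, Finset.card_range,
    Finset.prod_pow_eq_pow_sum]

lemma key_aux {F : Type} [Field F] [Fintype F] [DecidableEq F] (hq : Odd (Fintype.card F))
    (Q : F[X]) (hm : Q.Monic) (hi : Irreducible Q) (hQ0 : Q.eval 0 ≠ 0) :
    quadraticChar F (Q.eval 0) = -1 ↔ Irreducible (Q.comp (-(X ^ 2))) := by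
  classical
  haveI := Fact.mk hi
  set q := Fintype.card F with hqdef
  set n := Q.natDegree with hndef
  set K := AdjoinRoot Q with hKdef
  set α : K := AdjoinRoot.root Q with hαdef
  haveI : Nontrivial K := inferInstanceAs (Nontrivial (AdjoinRoot Q))
  have hn0 : 0 < n := by
    rcases Nat.eq_zero_or_pos n with h | h
    · exfalso
      have hQ : Q = C (Q.coeff 0) := eq_C_of_natDegree_eq_zero h
      have hco : Q.coeff 0 = 1 := by
        have hl := hm.leadingCoeff
        rwa [Polynomial.leadingCoeff, ← hndef, h] at hl
      have hQ1 : Q = 1 := by rw [hQ, hco, map_one]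
      exact hi.not_isUnit (hQ1 ▸ isUnit_one)
    · exact h
  letI pb := AdjoinRoot.powerBasis (f := Q) hm.ne_zero
  haveI : Module.Finite F K := Module.Finite.of_basis pb.basis
  letI : Fintype K := Module.fintypeOfFintype pb.basis
  have hfrFK : Module.finrank F K = n := by
    rw [pb.finrank, AdjoinRoot.powerBasis_dim]
  have hcardK : Fintype.card K = q ^ n := by
    rw [Module.card_eq_pow_finrank (K := F) (V := K), hfrFK]
  have hQα : (Polynomial.aeval α) Q = 0 := by
    rw [hαdef, AdjoinRoot.aeval_eq, AdjoinRoot.mk_self]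
  have hα0 : α ≠ 0 := by
    intro h
    apply hQ0
    have h2 : (Polynomial.aeval (0 : K)) Q = 0 := h ▸ hQα
    rw [aeval_def, eval₂_at_zero] at h2
    have := (algebraMap F K).injective (h2.trans (map_zero _).symm)
    rwa [coeff_zero_eq_eval_zero] at this
  -- characteristic facts
  have hcharF : ringChar F ≠ 2 := by
    intro h
    have := FiniteField.even_card_of_char_two h
    rw [← hqdef] at this
    have hodd := Nat.odd_iff.mp hq
    omega
  have hoddK : Fintype.card K % 2 = 1 := by
    rw [hcardK]
    exact Nat.odd_iff.mp (hq.pow)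
  have hcharK : ringChar K ≠ 2 := by
    intro h
    have := FiniteField.even_card_of_char_two h
    omega
  -- arithmetic
  obtain ⟨k, hk⟩ := hq
  set e := ∑ i ∈ Finset.range n, q ^ i with hedef
  have hgeomZ : (e : ℤ) * ((q : ℤ) - 1) = (q : ℤ) ^ n - 1 := by
    have := geom_sum_mul (q : ℤ) n
    rw [← this, hedef]
    push_cast
    ring
  have hqn : q ^ n = 2 * (e * k) + 1 := by
    have hz : ((q : ℤ)) ^ n = 2 * ((e : ℤ) * (k : ℤ)) + 1 := by
      have hkz : (q : ℤ) = 2 * k + 1 := by exact_mod_cast hk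
      have h2 : ((q : ℤ)) ^ n = (e : ℤ) * ((q : ℤ) - 1) + 1 := by rw [hgeomZ]; ring
      rw [h2, hkz]
      ring
    exact_mod_cast hz
  have hdiv : q ^ n / 2 = e * k := by omega
  have hk2 : q / 2 = k := by omega
  have hpar : e % 2 = n % 2 := by
    rw [hedef, Finset.sum_nat_mod]
    have : ∀ i ∈ Finset.range n, q ^ i % 2 = 1 := fun i _ =>
      Nat.odd_iff.mp ((Nat.odd_iff.mpr (by omega)).pow)
    rw [Finset.sum_congr rfl this, Finset.sum_const, Finset.card_range, smul_eq_mul, mul_one]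
  -- the conjugate product
  have hcp := conj_prod_aux Q hm hi
  have hneg : (-α) ^ e = algebraMap F K (Q.eval 0) := by
    have h1 : ((-1 : K)) ^ e = (-1 : K) ^ n := by
      rcases Nat.even_or_odd n with h | h
      · rw [h.neg_one_pow, (Nat.even_iff.mpr (by rw [hpar]; exact Nat.even_iff.mp h)).neg_one_pow]
      · rw [h.neg_one_pow, (Nat.odd_iff.mpr (by rw [hpar]; exact Nat.odd_iff.mp h)).neg_one_pow]
    rw [neg_pow, h1]
    exact hcp.symm
  -- squares correspondence
  have hsqK : IsSquare (-α) ↔ (Q.eval 0) ^ k = 1 := by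
    rw [FiniteField.isSquare_iff hcharK (neg_ne_zero.mpr hα0), hcardK, hdiv, pow_mul, hneg,
      ← map_pow]
    constructor
    · intro h
      exact (algebraMap F K).injective (h.trans (map_one _).symm)
    · intro h
      rw [h, map_one]
  have hsqF : IsSquare (Q.eval 0) ↔ (Q.eval 0) ^ k = 1 := by
    rw [FiniteField.isSquare_iff hcharF hQ0, ← hqdef, hk2]
  have hmain : quadraticChar F (Q.eval 0) = -1 ↔ ¬ IsSquare (-α) := by
    rw [quadraticChar_neg_one_iff_not_isSquare, hsqF, hsqK]
  rw [hmain]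
  -- now relate to irreducibility of the composition
  set R : F[X] := Q.comp (-(X ^ 2)) with hRdef
  have hRdeg : R.natDegree = n * 2 := by
    rw [hRdef, natDegree_comp, ← hndef]
    congr 1
    rw [natDegree_neg, natDegree_X_pow]
  have hR0 : R ≠ 0 := by
    intro h
    rw [h, natDegree_zero] at hRdeg
    omega
  constructor
  · -- ¬IsSquare (-α) → Irreducible R
    intro hns
    have h2irr : Irreducible ((X : K[X]) ^ 2 - C (-α)) := by
      refine X_pow_sub_C_irreducible_of_prime Nat.prime_two fun b hb => hns ⟨b, ?_⟩
      rw [← hb, sq]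
    haveI := Fact.mk h2irr
    set L := AdjoinRoot ((X : K[X]) ^ 2 - C (-α)) with hLdef
    set β : L := AdjoinRoot.root ((X : K[X]) ^ 2 - C (-α)) with hβdef
    have hmon2 : ((X : K[X]) ^ 2 - C (-α)).Monic := monic_X_pow_sub_C _ (by omega)
    letI pb2 := AdjoinRoot.powerBasis (f := (X : K[X]) ^ 2 - C (-α)) hmon2.ne_zero
    haveI : Module.Finite K L := Module.Finite.of_basis pb2.basis
    haveI : Module.Finite F L := Module.Finite.trans K L
    have hβ2 : β ^ 2 = algebraMap K L (-α) := by
      have h := AdjoinRoot.eval₂_root ((X : K[X]) ^ 2 - C (-α))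
      rw [eval₂_sub, eval₂_pow, eval₂_X, eval₂_C, sub_eq_zero] at h
      rw [hβdef, h, AdjoinRoot.algebraMap_eq]
    have hQαL : (Polynomial.aeval (algebraMap K L α)) Q = 0 := by
      rw [aeval_algebraMap_apply, hQα, map_zero]
    have haevβ : (Polynomial.aeval β) R = 0 := by
      rw [hRdef, aeval_comp]
      have h1 : (Polynomial.aeval β) (-(X ^ 2) : F[X]) = algebraMap K L α := by
        rw [map_neg, map_pow, aeval_X, hβ2]
        simp
        exact neg_neg _
      rw [h1, hQαL]
    have hβint : IsIntegral F β := IsIntegral.of_finite F β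
    have hαLint : IsIntegral F (algebraMap K L α) := IsIntegral.of_finite F _
    have hfrKL : Module.finrank K L = 2 := by
      rw [pb2.finrank, AdjoinRoot.powerBasis_dim]
      rw [natDegree_X_pow_sub_C]
    have hfrFL : Module.finrank F L = n * 2 := by
      rw [← Module.finrank_mul_finrank F K L, hfrFK, hfrKL]
    have hminαL : minpoly F (algebraMap K L α) = Q :=
      (minpoly.eq_of_irreducible_of_monic hi hQαL hm).symm
    have hαLmem : algebraMap K L α ∈ F⟮β⟯ := by
      have hαLeq : algebraMap K L α = -(β ^ 2) := by rw [hβ2]; simp; exact (neg_neg (algebraMap K L α)).symm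
      rw [hαLeq]
      exact neg_mem (pow_mem (IntermediateField.mem_adjoin_simple_self F β) 2)
    have hle : F⟮algebraMap K L α⟯ ≤ F⟮β⟯ := IntermediateField.adjoin_simple_le_iff.mpr hαLmem
    have hfr1 : Module.finrank F F⟮algebraMap K L α⟯ = n := by
      rw [IntermediateField.adjoin.finrank hαLint, hminαL]
    have hfr2 : Module.finrank F F⟮β⟯ = (minpoly F β).natDegree :=
      IntermediateField.adjoin.finrank hβint
    have hdvd_n : n ∣ Module.finrank F F⟮β⟯ := by
      refine ⟨IntermediateField.relfinrank F⟮algebraMap K L α⟯ F⟮β⟯, ?_⟩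
      rw [← hfr1]
      exact (IntermediateField.finrank_bot_mul_relfinrank hle).symm
    have hle2n : Module.finrank F F⟮β⟯ ≤ n * 2 := by
      rw [hfr2, ← hfrFL]
      exact minpoly.natDegree_le β
    have hpos : 0 < Module.finrank F F⟮β⟯ := Module.finrank_pos
    obtain ⟨c, hc⟩ := hdvd_n
    have hc1 : 1 ≤ c := by
      rcases Nat.eq_zero_or_pos c with rfl | h
      · omega
      · exact h
    have hc2 : c ≤ 2 := by
      by_contra h
      push_neg at h
      have : n * 3 ≤ n * c := Nat.mul_le_mul_left n (by omega)
      omega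
    interval_cases c
    · -- degree n : β comes from K, contradiction
      exfalso
      have heq : F⟮algebraMap K L α⟯ = F⟮β⟯ := by
        refine IntermediateField.eq_of_le_of_finrank_eq hle ?_
        rw [hfr1, hc, mul_one]
      set ψ : K →ₐ[F] L := IsScalarTower.toAlgHom F K L with hψdef
      have hsub : F⟮algebraMap K L α⟯ ≤ ψ.fieldRange := by
        refine IntermediateField.adjoin_simple_le_iff.mpr ⟨α, rfl⟩
      have hβmem : β ∈ ψ.fieldRange := hsub (heq ▸ IntermediateField.mem_adjoin_simple_self F β)
      obtain ⟨γ, hγ⟩ := hβmem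
      have hγ' : algebraMap K L γ = β := hγ
      apply hns
      refine ⟨γ, ?_⟩
      have hinj : Function.Injective (algebraMap K L) := RingHom.injective _
      apply hinj
      rw [map_mul, hγ', ← sq, hβ2]
    · -- degree 2n : R is (essentially) the minimal polynomial of β
      have hmindeg : (minpoly F β).natDegree = n * 2 := by
        rw [← hfr2, hc]
      have hmdvd : minpoly F β ∣ R := minpoly.dvd F β haevβ
      obtain ⟨t, ht⟩ := hmdvd
      have hmne : minpoly F β ≠ 0 := minpoly.ne_zero hβint
      have ht0 : t ≠ 0 := by
        rintro rfl
        rw [mul_zero] at ht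
        exact hR0 ht
      have htdeg : t.natDegree = 0 := by
        have := hRdeg
        rw [ht, natDegree_mul hmne ht0, hmindeg] at this
        omega
      have htunit : IsUnit t := by
        rw [eq_C_of_natDegree_eq_zero htdeg]
        refine isUnit_C.mpr (isUnit_iff_ne_zero.mpr ?_)
        intro h
        apply ht0
        rw [eq_C_of_natDegree_eq_zero htdeg, h, map_zero]
      have hassoc : Associated (minpoly F β) R := ⟨htunit.unit, by rw [ht]; rfl⟩
      exact hassoc.irreducible (minpoly.irreducible hβint)
  · -- Irreducible R → ¬IsSquare (-α)
    intro hR hsq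
    obtain ⟨γ, hγ⟩ := hsq
    have hγ2 : γ ^ 2 = -α := by rw [sq, ← hγ]
    have haev : (Polynomial.aeval γ) R = 0 := by
      rw [hRdef, aeval_comp]
      have h1 : (Polynomial.aeval γ) (-(X ^ 2) : F[X]) = α := by
        rw [map_neg, map_pow, aeval_X, hγ2, neg_neg]
      rw [h1, hQα]
    have hγint : IsIntegral F γ := IsIntegral.of_finite F γ
    have hmdvd : minpoly F γ ∣ R := minpoly.dvd F γ haev
    obtain ⟨t, ht⟩ := hmdvd
    rcases hR.isUnit_or_isUnit ht with h | h
    · exact minpoly.not_isUnit F γ h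
    · have htdeg : t.natDegree = 0 := natDegree_eq_zero_of_isUnit h
      have hmne : minpoly F γ ≠ 0 := minpoly.ne_zero hγint
      have ht0 : t ≠ 0 := by
        rintro rfl
        rw [mul_zero] at ht
        exact hR0 ht
      have hminle : (minpoly F γ).natDegree ≤ n := by
        rw [← hfrFK]
        exact minpoly.natDegree_le γ
      rw [ht, natDegree_mul hmne ht0, htdeg] at hRdeg
      omega

/-- For monic `f ∈ F_q[T]` (`q` odd): all monic irreducibles `Q` with
`χ_q(Q(0)) = -1` divide `f` with even multiplicity iff all monic irreducibles
`Q` with `Q(-S²)` irreducible in `F_q[S]` do; equivalently, for a monic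
irreducible `Q` of degree at least `1`, `χ_q(Q(0)) = -1` iff `Q(-S²)` is
irreducible in `F_q[S]`. -/
theorem even_multiplicity_condition_equiv (F : Type) [Field F] [Fintype F] [DecidableEq F]
    (hq : Odd (Fintype.card F)) (f : F[X]) (hf : f.Monic) :
    ((∀ Q : F[X], Q.Monic → Irreducible Q → quadraticChar F (Q.eval 0) = -1 →
        Even (multiplicity Q f)) ↔
      (∀ Q : F[X], Q.Monic → Irreducible Q → Irreducible (Q.comp (-(X ^ 2))) →
        Even (multiplicity Q f))) ∧
    (∀ Q : F[X], Q.Monic → Irreducible Q → 1 ≤ Q.natDegree →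
      (quadraticChar F (Q.eval 0) = -1 ↔ Irreducible (Q.comp (-(X ^ 2))))) := by
  have hpoint : ∀ Q : F[X], Q.Monic → Irreducible Q →
      (quadraticChar F (Q.eval 0) = -1 ↔ Irreducible (Q.comp (-(X ^ 2)))) := by
    intro Q hm hi
    by_cases hQ0 : Q.eval 0 = 0
    · constructor
      · intro h
        rw [hQ0, quadraticChar_zero] at h
        exact absurd h (by decide)
      · intro h
        exfalso
        have hXdvd : X ∣ Q := by
          rw [Polynomial.X_dvd_iff, coeff_zero_eq_eval_zero]
          exact hQ0
        obtain ⟨B, hB⟩ := hXdvd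
        have hfac : Q.comp (-(X ^ 2)) = X * (X * (-(B.comp (-(X ^ 2))))) := by
          rw [hB, mul_comp, X_comp]
          ring
        rcases h.isUnit_or_isUnit hfac with h1 | h1
        · exact Polynomial.not_isUnit_X h1
        · exact Polynomial.not_isUnit_X (isUnit_of_mul_isUnit_left h1)
    · exact key_aux hq Q hm hi hQ0
  refine ⟨⟨fun H Q hm hi hcomp => H Q hm hi ((hpoint Q hm hi).mpr hcomp),
    fun H Q hm hi hchi => H Q hm hi ((hpoint Q hm hi).mp hchi)⟩,
    fun Q hm hi _ => hpoint Q hm hi⟩
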